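/- arXiv:1507.00989 — 2 statements merged into one kernel-verified Lean document; each statement's English description precedes it below -/
import Mathlib

section
/- For a homeomorphism f of a compact metric space and any nonzero integer k, the shadowable points of f coincide with the shadowable points of f^k: Sh(f) = Sh(f^k). -/
open Metric Set

/-- Natural iterates of a homeomorphism. -/
def hnpow {X : Type*} [TopologicalSpace X] (f : X ≃ₜ X) : ℕ → X ≃ₜ X
  | 0 => Homeomorph.refl X
  | n+1 => (hnpow f n).trans f

/-- Integer iterates `fⁿ`, `n ∈ ℤ`, of a homeomorphism. -/
def hpow {X : Type*} [TopologicalSpace X] (f : X ≃ₜ X) : ℤ → X ≃ₜ X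
  | Int.ofNat n => hnpow f n
  | Int.negSucc n => hnpow f.symm (n+1)

variable {X : Type*} [MetricSpace X]

/-- `ξ` is a `δ`-pseudo-orbit of `f`. -/
def IsPseudoOrbit (f : X ≃ₜ X) (δ : ℝ) (ξ : ℤ → X) : Prop :=
  ∀ n : ℤ, dist (f (ξ n)) (ξ (n+1)) ≤ δ

/-- `ξ` is `ε`-shadowed by the orbit of `y`. -/
def ShadowedBy (f : X ≃ₜ X) (ε : ℝ) (y : X) (ξ : ℤ → X) : Prop :=
  ∀ n : ℤ, dist (hpow f n y) (ξ n) ≤ ε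

/-- `x` is a shadowable point of `f`. -/
def ShadowablePoint (f : X ≃ₜ X) (x : X) : Prop :=
  ∀ ε > 0, ∃ δ > 0, ∀ ξ : ℤ → X, IsPseudoOrbit f δ ξ → ξ 0 = x →
    ∃ y, ShadowedBy f ε y ξ

/-- `f` has the pseudo-orbit tracing property. -/
def POTP (f : X ≃ₜ X) : Prop :=
  ∀ ε > 0, ∃ δ > 0, ∀ ξ : ℤ → X, IsPseudoOrbit f δ ξ → ∃ y, ShadowedBy f ε y ξ

/-- `x` is a nonwandering point of `f`. -/
def NonWandering (f : X ≃ₜ X) (x : X) : Prop :=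
  ∀ U ∈ nhds x, ∃ k : ℕ, 0 < k ∧ ((hpow f (k : ℤ)) '' U ∩ U).Nonempty

/-- `x` is a chain recurrent point of `f`. -/
def ChainRecurrent (f : X ≃ₜ X) (x : X) : Prop :=
  ∀ ρ > 0, ∃ n : ℕ, 0 < n ∧ ∃ c : ℕ → X, c 0 = x ∧ c n = x ∧
    ∀ i < n, dist (f (c i)) (c (i+1)) ≤ ρ

/-- `f` is distal: `inf_{n∈ℤ} d(fⁿ x, fⁿ y) > 0` for all distinct `x, y`. -/
def Distal (f : X ≃ₜ X) : Prop :=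
  ∀ x y : X, x ≠ y → ∃ c > 0, ∀ n : ℤ, c ≤ dist (hpow f n x) (hpow f n y)

/-- `f` is minimal: every full orbit is dense. -/
def MinimalHomeo (f : X ≃ₜ X) : Prop :=
  ∀ x : X, Dense (Set.range fun n : ℤ => hpow f n x)

/-- `f` is equicontinuous (uniformly, over all integer iterates). -/
def EquicontinuousHomeo (f : X ≃ₜ X) : Prop :=
  ∀ α > 0, ∃ β > 0, ∀ x y : X, dist x y ≤ β → ∀ n : ℤ, dist (hpow f n x) (hpow f n y) ≤ α



section Aux
variable (f : X ≃ₜ X)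


lemma hpow_zero (x : X) : hpow f 0 x = x := rfl

lemma hpow_natCast (n : ℕ) (x : X) : hpow f (n : ℤ) x = hnpow f n x := rfl

lemma hnpow_succ (n : ℕ) (x : X) : hnpow f (n+1) x = f (hnpow f n x) := rfl

lemma hpow_succ (n : ℤ) (x : X) : hpow f (n+1) x = f (hpow f n x) := by
  cases n with
  | ofNat m => exact congrArg f rfl
  | negSucc m =>
    cases m with
    | zero => show x = f (f.symm x); simp
    | succ m =>
      show hnpow f.symm (m+1) x = f (hnpow f.symm (m+2) x)
      show hnpow f.symm (m+1) x = f (f.symm (hnpow f.symm (m+1) x))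
      simp

lemma hpow_pred (n : ℤ) (x : X) : hpow f (n-1) x = f.symm (hpow f n x) := by
  have := hpow_succ f (n-1) (x := x)
  rw [sub_add_cancel] at this
  rw [this]; simp

lemma hpow_add (a b : ℤ) (x : X) : hpow f (a + b) x = hpow f a (hpow f b x) := by
  induction a using Int.induction_on with
  | zero => rw [zero_add]; rfl
  | succ n ih =>
    have : (n:ℤ) + 1 + b = ((n:ℤ) + b) + 1 := by ring
    rw [this, hpow_succ, ih, hpow_succ]
  | pred n ih =>
    have : (-(n:ℤ) - 1) + b = (-(n:ℤ) + b) - 1 := by ring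
    rw [this, hpow_pred, ih, hpow_pred]

lemma hpow_symm (n : ℤ) (x : X) : hpow f.symm n x = hpow f (-n) x := by
  induction n using Int.induction_on with
  | zero => rfl
  | succ n ih => rw [hpow_succ, ih, show -((n:ℤ)+1) = -(n:ℤ) - 1 by ring, hpow_pred]
  | pred n ih => rw [show -(n:ℤ) - 1 = (-(n:ℤ)) - 1 by ring, hpow_pred, ih,
      show -(-(n:ℤ)-1) = -(-(n:ℤ)) + 1 by ring, hpow_succ, Homeomorph.symm_symm]

lemma hpow_hpow (k n : ℤ) (x : X) : hpow (hpow f k) n x = hpow f (n * k) x := by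
  induction n using Int.induction_on with
  | zero => rw [zero_mul]; rfl
  | succ n ih =>
    rw [hpow_succ, ih, show ((n:ℤ)+1) * k = k + n * k by ring, hpow_add]
  | pred n ih =>
    rw [show (-(n:ℤ)-1) = (-(n:ℤ)) - 1 by ring, hpow_pred, ih]
    apply (hpow f k).injective
    show hpow f k ((hpow f k).symm _) = _
    rw [Homeomorph.apply_symm_apply, ← hpow_add,
      show k + (-(n:ℤ)-1) * k = -(n:ℤ) * k by ring]

variable [CompactSpace X]

lemma unif (g : X ≃ₜ X) {e : ℝ} (he : 0 < e) :
    ∃ d > 0, ∀ a b : X, dist a b ≤ d → dist (g a) (g b) ≤ e := by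
  have h := CompactSpace.uniformContinuous_of_continuous g.continuous
  rw [Metric.uniformContinuous_iff] at h
  obtain ⟨δ, hδ, H⟩ := h e he
  exact ⟨δ/2, by positivity, fun a b hab =>
    le_of_lt (H (lt_of_le_of_lt hab (half_lt_self hδ)))⟩

lemma chain (f : X ≃ₜ X) :
    ∀ m : ℕ, ∀ e > (0:ℝ), ∃ δ > 0, ∀ ξ : ℤ → X, IsPseudoOrbit f δ ξ →
      ∀ i : ℤ, ∀ j : ℕ, j ≤ m → dist (hpow f (j:ℤ) (ξ i)) (ξ (i + j)) ≤ e := by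
  intro m
  induction m with
  | zero =>
    intro e he
    refine ⟨e, he, fun ξ _ i j hj => ?_⟩
    interval_cases j
    simpa [hpow_zero] using he.le
  | succ m ih =>
    intro e he
    obtain ⟨e', he', hu⟩ := unif f (half_pos he)
    obtain ⟨δ', hδ', H⟩ := ih (min e' e) (lt_min he' he)
    refine ⟨min δ' (e/2), lt_min hδ' (half_pos he), fun ξ hξ i j hj => ?_⟩
    have hξ' : IsPseudoOrbit f δ' ξ := fun n => le_trans (hξ n) (min_le_left _ _)
    rcases Nat.lt_succ_iff_lt_or_eq.mp (Nat.lt_succ_of_le hj) with hj' | rfl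
    · exact le_trans (H ξ hξ' i j (Nat.lt_succ_iff.mp hj')) (min_le_right _ _)
    · have h1 : dist (f (hpow f (m:ℤ) (ξ i))) (f (ξ (i + m))) ≤ e/2 :=
        hu _ _ (le_trans (H ξ hξ' i m le_rfl) (min_le_left _ _))
      have h2 : dist (f (ξ (i + m))) (ξ (i + m + 1)) ≤ e/2 :=
        le_trans (hξ (i + m)) (min_le_right _ _)
      have key : hpow f ((m+1 : ℕ) : ℤ) (ξ i) = f (hpow f (m:ℤ) (ξ i)) := by
        rw [show ((m+1:ℕ):ℤ) = (m:ℤ) + 1 by push_cast; ring, hpow_succ]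
      rw [key, show i + ((m+1:ℕ):ℤ) = i + m + 1 by push_cast; ring]
      calc dist _ _ ≤ _ + _ := dist_triangle _ (f (ξ (i + m))) _
        _ ≤ e/2 + e/2 := add_le_add h1 h2
        _ = e := add_halves e

lemma equicont (f : X ≃ₜ X) :
    ∀ m : ℕ, ∀ e > (0:ℝ), ∃ β > 0, ∀ a b : X, dist a b ≤ β →
      ∀ j : ℕ, j ≤ m → dist (hpow f (j:ℤ) a) (hpow f (j:ℤ) b) ≤ e := by
  intro m
  induction m with
  | zero =>
    intro e he
    refine ⟨e, he, fun a b hab j hj => ?_⟩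
    interval_cases j
    simpa [hpow_zero] using hab
  | succ m ih =>
    intro e he
    obtain ⟨β₁, hβ₁, H₁⟩ := ih e he
    obtain ⟨β₂, hβ₂, H₂⟩ := unif (hpow f ((m+1:ℕ):ℤ)) he
    refine ⟨min β₁ β₂, lt_min hβ₁ hβ₂, fun a b hab j hj => ?_⟩
    rcases Nat.lt_succ_iff_lt_or_eq.mp (Nat.lt_succ_of_le hj) with hj' | rfl
    · exact H₁ a b (le_trans hab (min_le_left _ _)) j (Nat.lt_succ_iff.mp hj')
    · exact H₂ a b (le_trans hab (min_le_right _ _))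

lemma sh_symm {f : X ≃ₜ X} {x : X} (h : ShadowablePoint f x) :
    ShadowablePoint f.symm x := by
  intro ε hε
  obtain ⟨δ, hδ, H⟩ := h ε hε
  obtain ⟨δ₂, hδ₂, hu⟩ := unif f hδ
  refine ⟨δ₂, hδ₂, fun ξ hξ hξ0 => ?_⟩
  set η : ℤ → X := fun n => ξ (-n) with hηdef
  have hη : IsPseudoOrbit f δ η := by
    intro n
    have h1 := hξ (-(n+1))
    have h2 := hu _ _ h1
    rw [Homeomorph.apply_symm_apply] at h2
    rw [dist_comm]
    simpa [hηdef, show -(n+1) + 1 = -n by ring] using h2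
  obtain ⟨y, hy⟩ := H η hη (by simpa [hηdef] using hξ0)
  refine ⟨y, fun n => ?_⟩
  rw [hpow_symm]
  simpa [hηdef] using hy (-n)

lemma sh_pow {f : X ≃ₜ X} {x : X} {k : ℤ} (hk : 0 < k) (h : ShadowablePoint f x) :
    ShadowablePoint (hpow f k) x := by
  intro ε hε
  obtain ⟨δ, hδ, H⟩ := h ε hε
  refine ⟨δ, hδ, fun ξ hξ hξ0 => ?_⟩
  set η : ℤ → X := fun i => hpow f (i % k) (ξ (i / k)) with hηdef
  have hη : IsPseudoOrbit f δ η := by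
    intro i
    have hr0 : 0 ≤ i % k := Int.emod_nonneg i hk.ne'
    have hrk : i % k < k := Int.emod_lt_of_pos i hk
    have hi : k * (i / k) + i % k = i := Int.mul_ediv_add_emod i k
    by_cases hc : i % k + 1 < k
    · have hi1 : i + 1 = (i % k + 1) + (i / k) * k := by linarith [hi]
      have e2 : (i+1) / k = i / k := by
        rw [hi1, Int.add_mul_ediv_right _ _ hk.ne',
          Int.ediv_eq_zero_of_lt (by linarith) hc, zero_add]
      have e1 : (i+1) % k = i % k + 1 := by
        rw [hi1, Int.add_mul_emod_self_right, Int.emod_eq_of_lt (by linarith) hc]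
      simp only [hηdef, e1, e2, hpow_succ]
      rw [dist_self]
      exact hδ.le
    · have hik : i % k + 1 = k := le_antisymm (Int.add_one_le_iff.mpr hrk) (not_lt.mp hc)
      have hi1 : i + 1 = (i / k + 1) * k := by nlinarith [hi, hik]
      have e2 : (i+1) / k = i / k + 1 := by rw [hi1, Int.mul_ediv_cancel _ hk.ne']
      have e1 : (i+1) % k = 0 := by rw [hi1, Int.mul_emod_left]
      simp only [hηdef, e1, e2]
      show dist (f (hpow f (i % k) (ξ (i / k)))) (hpow f 0 (ξ (i / k + 1))) ≤ δ
      rw [hpow_zero, ← hpow_succ, hik]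
      exact hξ _
  have hη0 : η 0 = x := by
    simp only [hηdef, Int.zero_emod, Int.zero_ediv]
    rw [hpow_zero]; exact hξ0
  obtain ⟨y, hy⟩ := H η hη hη0
  refine ⟨y, fun n => ?_⟩
  rw [hpow_hpow]
  have := hy (n * k)
  simp only [hηdef, Int.mul_emod_left, Int.mul_ediv_cancel _ hk.ne'] at this
  rwa [hpow_zero] at this

lemma sh_of_pow {f : X ≃ₜ X} {x : X} {k : ℤ} (hk : 0 < k)
    (h : ShadowablePoint (hpow f k) x) : ShadowablePoint f x := by
  intro ε hε
  obtain ⟨β, hβ, HE⟩ := equicont f k.toNat (ε/2) (half_pos hε)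
  obtain ⟨δ₁, hδ₁, H⟩ := h β hβ
  obtain ⟨δ, hδ, HC⟩ := chain f k.toNat (min δ₁ (ε/2)) (lt_min hδ₁ (half_pos hε))
  refine ⟨δ, hδ, fun ξ hξ hξ0 => ?_⟩
  have hkc : ((k.toNat : ℕ) : ℤ) = k := Int.toNat_of_nonneg hk.le
  set ζ : ℤ → X := fun n => ξ (n * k) with hζdef
  have hζ : IsPseudoOrbit (hpow f k) δ₁ ζ := by
    intro n
    have h1 := HC ξ hξ (n * k) k.toNat le_rfl
    rw [hkc] at h1
    have h2 : (n + 1) * k = n * k + k := by ring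
    simp only [hζdef, h2]
    exact le_trans h1 (min_le_left _ _)
  obtain ⟨y, hy⟩ := H ζ hζ (by simpa [hζdef] using hξ0)
  refine ⟨y, fun i => ?_⟩
  have hr0 : 0 ≤ i % k := Int.emod_nonneg i hk.ne'
  have hrk : i % k < k := Int.emod_lt_of_pos i hk
  have hi : k * (i / k) + i % k = i := Int.mul_ediv_add_emod i k
  have hrc : (((i % k).toNat : ℕ) : ℤ) = i % k := Int.toNat_of_nonneg hr0
  have hrle : (i % k).toNat ≤ k.toNat := Int.toNat_le_toNat hrk.le
  have h1 : dist (hpow f (i % k) (hpow (hpow f k) (i / k) y))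
      (hpow f (i % k) (ξ ((i / k) * k))) ≤ ε/2 := by
    have := HE (hpow (hpow f k) (i / k) y) (ξ ((i / k) * k)) (hy (i / k)) (i % k).toNat hrle
    rwa [hrc] at this
  have h2 : dist (hpow f (i % k) (ξ ((i / k) * k))) (ξ ((i / k) * k + i % k)) ≤ ε/2 := by
    have := HC ξ hξ ((i / k) * k) (i % k).toNat hrle
    rw [hrc] at this
    exact le_trans this (min_le_right _ _)
  have hpt : hpow f i y = hpow f (i % k) (hpow (hpow f k) (i / k) y) := by
    rw [hpow_hpow, ← hpow_add, show i % k + (i / k) * k = i by linarith [hi]]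
  have hidx : (i / k) * k + i % k = i := by linarith [hi]
  calc dist (hpow f i y) (ξ i)
      = dist (hpow f (i % k) (hpow (hpow f k) (i / k) y)) (ξ ((i / k) * k + i % k)) := by
        rw [hpt, hidx]
    _ ≤ dist _ (hpow f (i % k) (ξ ((i / k) * k))) + dist _ _ := dist_triangle _ _ _
    _ ≤ ε/2 + ε/2 := add_le_add h1 h2
    _ = ε := add_halves ε

end Aux

theorem stmt7 [CompactSpace X] (f : X ≃ₜ X) (k : ℤ) (hk : k ≠ 0) :
    {x | ShadowablePoint f x} = {x | ShadowablePoint (hpow f k) x} := by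
  ext x
  simp only [Set.mem_setOf_eq]
  rcases lt_trichotomy k 0 with hneg | rfl | hpos
  · have hk' : 0 < -k := by linarith
    have heq : hpow f k = hpow f.symm (-k) := by ext z; rw [hpow_symm, neg_neg]
    rw [heq]
    constructor
    · intro h; exact sh_pow hk' (sh_symm h)
    · intro h
      have := sh_symm (sh_of_pow hk' h)
      rwa [Homeomorph.symm_symm] at this
  · exact absurd rfl hk
  · exact ⟨sh_pow hpos, sh_of_pow hpos⟩
end

section
/- Let f be a homeomorphism of a compact metric space. If z is both nonwandering and shadowable, then for every ε>0 there exist k∈ℕ⁺ and y∈X such that d(f^{pk}(y), z) ≤ ε for every p∈ℤ. -/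
open Metric Set

variable {X : Type*} [MetricSpace X]

lemma hnpow_succ_apply {Y : Type*} [TopologicalSpace Y] (f : Y ≃ₜ Y) (n : ℕ) (x : Y) :
    hnpow f (n+1) x = f (hnpow f n x) := rfl

lemma hpow_natCast_s8 {Y : Type*} [TopologicalSpace Y] (f : Y ≃ₜ Y) (n : ℕ) :
    hpow f (n : ℤ) = hnpow f n := rfl

theorem stmt8 [CompactSpace X] (f : X ≃ₜ X) (z : X)
    (h1 : NonWandering f z) (h2 : ShadowablePoint f z) :
    ∀ ε > 0, ∃ k : ℕ, 0 < k ∧ ∃ y : X, ∀ p : ℤ, dist (hpow f (p * k) y) z ≤ ε := by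
  intro ε hε
  obtain ⟨δ, hδ, hsh⟩ := h2 ε hε
  obtain ⟨δ'', hδ'', hcont⟩ := Metric.continuous_iff.mp f.continuous z (δ/2) (by linarith)
  set δ' := min (δ/2) δ'' with hδ'def
  have hδ'pos : 0 < δ' := lt_min (by linarith) hδ''
  obtain ⟨k, hk, v, ⟨u, hu, huv⟩, hvU⟩ :=
    h1 (Metric.ball z δ') (Metric.ball_mem_nhds z hδ'pos)
  have hk0 : (0:ℤ) < (k:ℤ) := by exact_mod_cast hk
  have hfu : dist (f u) (f z) < δ/2 := hcont u (lt_of_lt_of_le hu (min_le_right _ _))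
  have hfk : dist (hnpow f k u) z < δ' := by
    rw [← huv] at hvU; simpa [Metric.mem_ball, hpow_natCast_s8] using hvU
  set ξ : ℤ → X := fun n => if n % (k:ℤ) = 0 then z else hnpow f (n % (k:ℤ)).toNat u with hξ
  have key0 : ∀ m : ℤ, m % (k:ℤ) = 0 → ξ m = z := by
    intro m hm; simp only [hξ]; rw [if_pos hm]
  have key1 : ∀ m : ℤ, m % (k:ℤ) ≠ 0 → ξ m = hnpow f (m % (k:ℤ)).toNat u := by
    intro m hm; simp only [hξ]; rw [if_neg hm]
  have hmod : ∀ n : ℤ, (n+1) % (k:ℤ) = (n % (k:ℤ) + 1) % (k:ℤ) := by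
    intro n
    conv_lhs => rw [← Int.mul_ediv_add_emod n (k:ℤ)]
    rw [add_assoc, add_comm ((k:ℤ) * (n / (k:ℤ))), Int.add_mul_emod_self_left]
  have hd2 : δ' ≤ δ/2 := min_le_left _ _
  have hpo : IsPseudoOrbit f δ ξ := by
    intro n
    have hr0 : 0 ≤ n % (k:ℤ) := Int.emod_nonneg n (by omega)
    have hrk : n % (k:ℤ) < (k:ℤ) := Int.emod_lt_of_pos n hk0
    by_cases hlast : n % (k:ℤ) = (k:ℤ) - 1
    · have h1' : (n+1) % (k:ℤ) = 0 := by rw [hmod, hlast]; simp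
      rw [key0 _ h1']
      by_cases hk1 : k = 1
      · have h0 : n % (k:ℤ) = 0 := by omega
        rw [key0 _ h0]
        have h2' : dist (f u) z < δ' := by
          have : hnpow f k u = f u := by rw [hk1]; rfl
          rwa [this] at hfk
        calc dist (f z) z ≤ dist (f z) (f u) + dist (f u) z := dist_triangle _ _ _
          _ ≤ δ/2 + δ' := by rw [dist_comm] at hfu; linarith
          _ ≤ δ := by linarith
      · have hne : n % (k:ℤ) ≠ 0 := by omega
        have htn : (n % (k:ℤ)).toNat + 1 = k := by omega
        rw [key1 _ hne]
        have heq : f (hnpow f (n % (k:ℤ)).toNat u) = hnpow f ((n % (k:ℤ)).toNat + 1) u := rfl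
        rw [heq, htn]
        linarith
    · have h1' : (n+1) % (k:ℤ) = n % (k:ℤ) + 1 := by
        rw [hmod]
        exact Int.emod_eq_of_lt (by omega) (by omega)
      have hne1 : (n+1) % (k:ℤ) ≠ 0 := by omega
      rw [key1 _ hne1, h1']
      by_cases h0 : n % (k:ℤ) = 0
      · rw [key0 _ h0, h0]
        have heq : hnpow f ((0:ℤ)+1).toNat u = f u := rfl
        rw [heq]
        rw [dist_comm] at hfu
        linarith
      · rw [key1 _ h0]
        have htn : (n % (k:ℤ) + 1).toNat = (n % (k:ℤ)).toNat + 1 := by omega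
        rw [htn]
        have heq : f (hnpow f (n % (k:ℤ)).toNat u) = hnpow f ((n % (k:ℤ)).toNat + 1) u := rfl
        rw [heq]
        simp [le_of_lt hδ]
  have hξ0 : ξ 0 = z := key0 0 (by simp)
  obtain ⟨y, hy⟩ := hsh ξ hpo hξ0
  refine ⟨k, hk, y, fun p => ?_⟩
  have hpk : ξ (p * (k:ℤ)) = z := key0 _ (Int.mul_emod_left p (k:ℤ))
  have := hy (p * (k:ℤ))
  rwa [hpk] at this
end
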